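/- (Lemma 3.2(i)) Suppose X_⋆ is Hermitian and there exists a Hermitian X_T with R_{X_T} invertible, ρ(T̂_{X_T}) < 1, and C_{T_{X_T}}(X_⋆) ≥ H_{X_T}. Then for every Hermitian X_P with R_{X_P} positive definite and X_P ≤ R(X_P), one has X_⋆ ≥ X_P; consequently R_{X_⋆} is positive definite. -/

import Mathlib

open Matrix Filter Topology
open scoped ComplexOrder

noncomputable section

namespace CDARE

variable {n m : ℕ}

/-- Entrywise complex conjugate of a matrix. -/
def mconj {p q : ℕ} (M : Matrix (Fin p) (Fin q) ℂ) : Matrix (Fin p) (Fin q) ℂ :=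
  M.map (starRingEnd ℂ)

/-- `hatM M = conj M * M`. -/
def hatM (M : Matrix (Fin n) (Fin n) ℂ) : Matrix (Fin n) (Fin n) ℂ := mconj M * M

/-- `R_X = R + Bᴴ X̄ B`. -/
def RX (R : Matrix (Fin m) (Fin m) ℂ) (B : Matrix (Fin n) (Fin m) ℂ)
    (X : Matrix (Fin n) (Fin n) ℂ) : Matrix (Fin m) (Fin m) ℂ :=
  R + Bᴴ * mconj X * B

/-- `F_X = R_X⁻¹ Bᴴ X̄ A`. -/
def FX (A : Matrix (Fin n) (Fin n) ℂ) (B : Matrix (Fin n) (Fin m) ℂ)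
    (R : Matrix (Fin m) (Fin m) ℂ) (X : Matrix (Fin n) (Fin n) ℂ) :
    Matrix (Fin m) (Fin n) ℂ :=
  (RX R B X)⁻¹ * (Bᴴ * mconj X * A)

/-- `T_X = A - B F_X`. -/
def TX (A : Matrix (Fin n) (Fin n) ℂ) (B : Matrix (Fin n) (Fin m) ℂ)
    (R : Matrix (Fin m) (Fin m) ℂ) (X : Matrix (Fin n) (Fin n) ℂ) :
    Matrix (Fin n) (Fin n) ℂ :=
  A - B * FX A B R X

/-- The Riccati operator `R(X)`. -/
def Rop (A : Matrix (Fin n) (Fin n) ℂ) (B : Matrix (Fin n) (Fin m) ℂ)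
    (R : Matrix (Fin m) (Fin m) ℂ) (H : Matrix (Fin n) (Fin n) ℂ)
    (X : Matrix (Fin n) (Fin n) ℂ) : Matrix (Fin n) (Fin n) ℂ :=
  Aᴴ * mconj X * A - Aᴴ * mconj X * B * (RX R B X)⁻¹ * (Bᴴ * mconj X * A) + H

/-- `H_X = H + F_Xᴴ R F_X`. -/
def HX (A : Matrix (Fin n) (Fin n) ℂ) (B : Matrix (Fin n) (Fin m) ℂ)
    (R : Matrix (Fin m) (Fin m) ℂ) (H : Matrix (Fin n) (Fin n) ℂ)
    (X : Matrix (Fin n) (Fin n) ℂ) : Matrix (Fin n) (Fin n) ℂ :=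
  H + (FX A B R X)ᴴ * R * FX A B R X

/-- `K(Y, X) = (F_Y - F_X)ᴴ R_X (F_Y - F_X)`. -/
def Kop (A : Matrix (Fin n) (Fin n) ℂ) (B : Matrix (Fin n) (Fin m) ℂ)
    (R : Matrix (Fin m) (Fin m) ℂ) (Y X : Matrix (Fin n) (Fin n) ℂ) :
    Matrix (Fin n) (Fin n) ℂ :=
  (FX A B R Y - FX A B R X)ᴴ * RX R B X * (FX A B R Y - FX A B R X)

/-- Conjugate Stein operator `C_C(X) = X - Cᴴ X̄ C`. -/
def CStein (C X : Matrix (Fin n) (Fin n) ℂ) : Matrix (Fin n) (Fin n) ℂ :=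
  X - Cᴴ * mconj X * C

/-- The set `S_≥`. -/
def Sge (A : Matrix (Fin n) (Fin n) ℂ) (B : Matrix (Fin n) (Fin m) ℂ)
    (R : Matrix (Fin m) (Fin m) ℂ) (H : Matrix (Fin n) (Fin n) ℂ) :
    Set (Matrix (Fin n) (Fin n) ℂ) :=
  {X | X.IsHermitian ∧ ∃ XT : Matrix (Fin n) (Fin n) ℂ, XT.IsHermitian ∧
      IsUnit (RX R B XT) ∧ spectralRadius ℂ (hatM (TX A B R XT)) < 1 ∧
      (CStein (TX A B R XT) X - HX A B R H XT).PosSemidef}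

/-! ### Auxiliary lemmas -/

lemma mconj_mul {p q r : ℕ} (M : Matrix (Fin p) (Fin q) ℂ) (N : Matrix (Fin q) (Fin r) ℂ) :
    mconj (M * N) = mconj M * mconj N := by
  simp [mconj, Matrix.map_mul]

lemma mconj_mconj {p q : ℕ} (M : Matrix (Fin p) (Fin q) ℂ) : mconj (mconj M) = M := by
  ext i j; simp [mconj]

lemma mconj_sub {p q : ℕ} (M N : Matrix (Fin p) (Fin q) ℂ) :
    mconj (M - N) = mconj M - mconj N := by
  ext i j; simp [mconj]

lemma mconj_conjTranspose {p q : ℕ} (M : Matrix (Fin p) (Fin q) ℂ) :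
    mconj (Mᴴ) = Mᵀ := by
  ext i j; simp [mconj, conjTranspose_apply]

lemma conjTranspose_mconj {p q : ℕ} (M : Matrix (Fin p) (Fin q) ℂ) :
    (mconj M)ᴴ = Mᵀ := by
  ext i j; simp [mconj, conjTranspose_apply]

lemma mconj_eq_transpose_of_isHermitian {M : Matrix (Fin n) (Fin n) ℂ} (hM : M.IsHermitian) :
    mconj M = Mᵀ := by
  ext i j; simpa [mconj] using congrFun (congrFun hM j) i

lemma isHermitian_mconj {M : Matrix (Fin n) (Fin n) ℂ} (hM : M.IsHermitian) :
    (mconj M).IsHermitian := by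
  rw [mconj_eq_transpose_of_isHermitian hM]; exact hM.transpose

lemma posSemidef_mconj {M : Matrix (Fin n) (Fin n) ℂ} (hM : M.PosSemidef) :
    (mconj M).PosSemidef := by
  rw [mconj_eq_transpose_of_isHermitian hM.1]; exact hM.transpose

section Spectral
attribute [local instance] Matrix.linftyOpNormedRing Matrix.linftyOpNormedAlgebra

lemma norm_pow_eventually_le {N : ℕ} (S : Matrix (Fin N) (Fin N) ℂ)
    (h : spectralRadius ℂ S < 1) :
    ∃ r : ℝ, 0 ≤ r ∧ r < 1 ∧ ∀ᶠ k in atTop, ‖S ^ k‖ ≤ r ^ k := by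
  obtain ⟨r, hr1, hr2⟩ := ENNReal.lt_iff_exists_nnreal_btwn.mp h
  refine ⟨r, r.coe_nonneg, by exact_mod_cast hr2, ?_⟩
  have hg := spectrum.pow_nnnorm_pow_one_div_tendsto_nhds_spectralRadius S
  have hev : ∀ᶠ k : ℕ in atTop, (‖S ^ k‖₊ : ENNReal) ^ (1 / (k : ℝ)) < r :=
    hg.eventually_lt_const hr1
  filter_upwards [hev, eventually_ge_atTop 1] with k hk hk1
  have hk0 : (k : ℝ) ≠ 0 := Nat.cast_ne_zero.mpr (by omega)
  have : ((‖S ^ k‖₊ : ENNReal) ^ (1 / (k : ℝ))) ^ (k : ℝ) ≤ (r : ENNReal) ^ (k : ℝ) :=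
    ENNReal.rpow_le_rpow hk.le (Nat.cast_nonneg k)
  have h2 : (‖S ^ k‖₊ : ENNReal) ≤ (r : ENNReal) ^ (k : ℝ) := by
    rwa [← ENNReal.rpow_mul, one_div, inv_mul_cancel₀ hk0, ENNReal.rpow_one] at this
  rw [ENNReal.rpow_natCast, ← ENNReal.coe_pow, ENNReal.coe_le_coe] at h2
  calc ‖S ^ k‖ = (‖S ^ k‖₊ : ℝ) := rfl
    _ ≤ ((r ^ k : NNReal) : ℝ) := by exact_mod_cast h2
    _ = (r : ℝ) ^ k := by push_cast; ring

lemma quad_tendsto {N : ℕ} (S D : Matrix (Fin N) (Fin N) ℂ) (v : Fin N → ℂ)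
    (h : spectralRadius ℂ S < 1) :
    Tendsto (fun k : ℕ => star ((S ^ k) *ᵥ v) ⬝ᵥ (D *ᵥ ((S ^ k) *ᵥ v))) atTop (𝓝 0) := by
  obtain ⟨r, hr0, hr1, hev⟩ := norm_pow_eventually_le S h
  apply squeeze_zero_norm' (a := fun k : ℕ => ((N : ℝ) * ‖D‖ * ‖v‖ * ‖v‖) * (r ^ 2) ^ k)
  · filter_upwards [hev] with k hk
    set w := (S ^ k) *ᵥ v with hw
    have hw2 : ‖w‖ ≤ r ^ k * ‖v‖ :=
      (Matrix.linfty_opNorm_mulVec _ _).trans (mul_le_mul_of_nonneg_right hk (norm_nonneg v))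
    have key : ‖star w ⬝ᵥ (D *ᵥ w)‖ ≤ (N : ℝ) * (‖w‖ * (‖D‖ * ‖w‖)) := by
      calc ‖star w ⬝ᵥ (D *ᵥ w)‖ ≤ ∑ i, ‖(star w) i * (D *ᵥ w) i‖ := norm_sum_le _ _
        _ = ∑ i, ‖w i‖ * ‖(D *ᵥ w) i‖ := by simp [norm_mul]
        _ ≤ ∑ _i : Fin N, ‖w‖ * (‖D‖ * ‖w‖) := Finset.sum_le_sum (fun i _ =>
            mul_le_mul (norm_le_pi_norm w i)
              ((norm_le_pi_norm _ i).trans (Matrix.linfty_opNorm_mulVec D w))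
              (norm_nonneg _) (norm_nonneg _))
        _ = (N : ℝ) * (‖w‖ * (‖D‖ * ‖w‖)) := by
            simp [Finset.sum_const, nsmul_eq_mul]
    calc ‖star w ⬝ᵥ (D *ᵥ w)‖ ≤ (N : ℝ) * (‖w‖ * (‖D‖ * ‖w‖)) := key
      _ ≤ (N : ℝ) * ((r ^ k * ‖v‖) * (‖D‖ * (r ^ k * ‖v‖))) := by gcongr
      _ = ((N : ℝ) * ‖D‖ * ‖v‖ * ‖v‖) * (r ^ 2) ^ k := by ring
  · have h1 : r ^ 2 < 1 := by nlinarith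
    simpa using (tendsto_pow_atTop_nhds_zero_of_lt_one (by positivity) h1).const_mul
      ((N : ℝ) * ‖D‖ * ‖v‖ * ‖v‖)

end Spectral

lemma key_identity {p q : ℕ} (A : Matrix (Fin p) (Fin p) ℂ) (B : Matrix (Fin p) (Fin q) ℂ)
    (X H : Matrix (Fin p) (Fin p) ℂ) (S R' : Matrix (Fin q) (Fin q) ℂ)
    (F G : Matrix (Fin q) (Fin p) ℂ)
    (h1 : Bᴴ * (X * A) = S * G) (h2' : Aᴴ * (X * B) = Gᴴ * S) (h2 : Bᴴ * (X * B) = S - R') :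
    (A - B * F)ᴴ * X * (A - B * F) + H + Fᴴ * R' * F
      = (Aᴴ * X * A - Gᴴ * S * G + H) + (F - G)ᴴ * S * (F - G) := by
  have h4 : Aᴴ * (X * (B * F)) = Gᴴ * (S * F) := by
    rw [← Matrix.mul_assoc X B, ← Matrix.mul_assoc Aᴴ, h2', Matrix.mul_assoc]
  have h5 : Bᴴ * (X * (B * F)) = (S - R') * F := by
    rw [← Matrix.mul_assoc X B, ← Matrix.mul_assoc Bᴴ, h2]
  simp only [conjTranspose_sub, conjTranspose_mul, Matrix.sub_mul, Matrix.mul_sub,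
    Matrix.add_mul, Matrix.mul_add, Matrix.mul_assoc, h1, h2, h2', h4, h5]
  abel

lemma stein_psd {N : ℕ} (T Δ : Matrix (Fin N) (Fin N) ℂ) (hΔ : Δ.IsHermitian)
    (hW : (Δ - Tᴴ * mconj Δ * T).PosSemidef)
    (hρ : spectralRadius ℂ (hatM T) < 1) : Δ.PosSemidef := by
  have hdouble : ∀ Y : Matrix (Fin N) (Fin N) ℂ,
      Tᴴ * mconj (Tᴴ * mconj Y * T) * T = (hatM T)ᴴ * Y * hatM T := by
    intro Y
    simp [hatM, mconj_mul, mconj_conjTranspose, mconj_mconj, conjTranspose_mul,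
      conjTranspose_mconj, Matrix.mul_assoc]
  have hW2 : (Δ - (hatM T)ᴴ * Δ * hatM T).PosSemidef := by
    have hTW : (Tᴴ * mconj (Δ - Tᴴ * mconj Δ * T) * T).PosSemidef :=
      (posSemidef_mconj hW).conjTranspose_mul_mul_same T
    have e : Δ - (hatM T)ᴴ * Δ * hatM T
        = (Δ - Tᴴ * mconj Δ * T) + Tᴴ * mconj (Δ - Tᴴ * mconj Δ * T) * T := by
      rw [mconj_sub, Matrix.mul_sub, Matrix.sub_mul, hdouble]
      abel
    rw [e]; exact hW.add hTW
  have hE : ∀ k : ℕ, (Δ - (hatM T ^ k)ᴴ * Δ * hatM T ^ k).PosSemidef := by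
    intro k
    induction k with
    | zero => simpa using Matrix.PosSemidef.zero
    | succ k ih =>
      have e : Δ - (hatM T ^ (k + 1))ᴴ * Δ * hatM T ^ (k + 1)
          = (Δ - (hatM T)ᴴ * Δ * hatM T)
            + (hatM T)ᴴ * (Δ - (hatM T ^ k)ᴴ * Δ * hatM T ^ k) * hatM T := by
        simp only [pow_succ, conjTranspose_mul, Matrix.mul_sub, Matrix.sub_mul,
          Matrix.mul_assoc]
        abel
      rw [e]
      exact hW2.add (ih.conjTranspose_mul_mul_same (hatM T))
  refine Matrix.PosSemidef.of_dotProduct_mulVec_nonneg hΔ fun v => ?_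
  have hq := quad_tendsto (hatM T) Δ v hρ
  have hle : ∀ k : ℕ,
      star ((hatM T ^ k) *ᵥ v) ⬝ᵥ (Δ *ᵥ ((hatM T ^ k) *ᵥ v)) ≤ star v ⬝ᵥ (Δ *ᵥ v) := by
    intro k
    have hpsd := (hE k).dotProduct_mulVec_nonneg v
    have e : star v ⬝ᵥ ((Δ - (hatM T ^ k)ᴴ * Δ * hatM T ^ k) *ᵥ v)
        = star v ⬝ᵥ (Δ *ᵥ v)
          - star ((hatM T ^ k) *ᵥ v) ⬝ᵥ (Δ *ᵥ ((hatM T ^ k) *ᵥ v)) := by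
      rw [Matrix.sub_mulVec, dotProduct_sub]
      congr 1
      rw [← Matrix.mulVec_mulVec, ← Matrix.mulVec_mulVec, Matrix.dotProduct_mulVec,
        ← Matrix.star_mulVec]
    rw [e] at hpsd
    exact sub_nonneg.mp hpsd
  have hcl : IsClosed {z : ℂ | 0 ≤ z} := by
    have : {z : ℂ | 0 ≤ z} = Complex.re ⁻¹' Set.Ici 0 ∩ Complex.im ⁻¹' {0} := by
      ext z
      simp [Complex.le_def, eq_comm]
    rw [this]
    exact (isClosed_Ici.preimage Complex.continuous_re).inter
      (isClosed_singleton.preimage Complex.continuous_im)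
  have h2 : Tendsto
      (fun k : ℕ => star v ⬝ᵥ (Δ *ᵥ v)
        - star ((hatM T ^ k) *ᵥ v) ⬝ᵥ (Δ *ᵥ ((hatM T ^ k) *ᵥ v)))
      atTop (𝓝 (star v ⬝ᵥ (Δ *ᵥ v))) := by
    simpa using tendsto_const_nhds.sub hq
  exact hcl.mem_of_tendsto h2
    (Filter.Eventually.of_forall fun k => sub_nonneg.mpr (hle k))

/-- Lemma 3.2(i): any `X_⋆ ∈ S_≥` dominates every `X_P ∈ R_≤ ∩ ℙ`, and consequently
`R_{X_⋆}` is positive definite. -/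
theorem lemma_3_2_i (n m : ℕ) (A : Matrix (Fin n) (Fin n) ℂ) (B : Matrix (Fin n) (Fin m) ℂ)
    (R : Matrix (Fin m) (Fin m) ℂ) (H : Matrix (Fin n) (Fin n) ℂ)
    (hR : R.IsHermitian) (hRunit : IsUnit R) (hH : H.IsHermitian)
    (Xstar : Matrix (Fin n) (Fin n) ℂ) (hXstar : Xstar.IsHermitian)
    (hS : ∃ XT : Matrix (Fin n) (Fin n) ℂ, XT.IsHermitian ∧ IsUnit (RX R B XT) ∧
      spectralRadius ℂ (hatM (TX A B R XT)) < 1 ∧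
      (CStein (TX A B R XT) Xstar - HX A B R H XT).PosSemidef) :
    ∀ XP : Matrix (Fin n) (Fin n) ℂ, XP.IsHermitian → (RX R B XP).PosDef →
      (Rop A B R H XP - XP).PosSemidef →
      (Xstar - XP).PosSemidef ∧ (RX R B Xstar).PosDef := by
  intro XP hXP hRXP hRic
  obtain ⟨XT, hXT, hRXTunit, hrho, hC⟩ := hS
  have hXh : (mconj XP)ᴴ = mconj XP := isHermitian_mconj hXP
  have hSh : (RX R B XP)ᴴ = RX R B XP := hRXP.1
  have hdet : IsUnit (RX R B XP).det := (Matrix.isUnit_iff_isUnit_det _).mp hRXP.isUnit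
  have h1 : Bᴴ * (mconj XP * A) = RX R B XP * FX A B R XP := by
    rw [FX, ← Matrix.mul_assoc (RX R B XP), Matrix.mul_nonsing_inv _ hdet, Matrix.one_mul,
      ← Matrix.mul_assoc]
  have h2 : Bᴴ * (mconj XP * B) = RX R B XP - R := by
    rw [RX, ← Matrix.mul_assoc]
    abel
  have h2' : Aᴴ * (mconj XP * B) = (FX A B R XP)ᴴ * RX R B XP := by
    have h := congrArg conjTranspose h1
    simpa [conjTranspose_mul, hXh, hSh, Matrix.mul_assoc] using h
  have hKpsd : ((FX A B R XT - FX A B R XP)ᴴ * RX R B XP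
      * (FX A B R XT - FX A B R XP)).PosSemidef :=
    hRXP.posSemidef.conjTranspose_mul_mul_same _
  have hRopEq : Rop A B R H XP
      = Aᴴ * mconj XP * A - (FX A B R XP)ᴴ * RX R B XP * FX A B R XP + H := by
    rw [Rop]
    have e : Aᴴ * mconj XP * B * (RX R B XP)⁻¹ * (Bᴴ * mconj XP * A)
        = (FX A B R XP)ᴴ * RX R B XP * FX A B R XP := by
      rw [Matrix.mul_assoc Aᴴ, h2', Matrix.mul_assoc ((FX A B R XP)ᴴ),
        Matrix.mul_nonsing_inv _ hdet, Matrix.mul_one, Matrix.mul_assoc Bᴴ, h1, ← Matrix.mul_assoc]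
    rw [e]
  have hkey := key_identity A B (mconj XP) H (RX R B XP) R (FX A B R XT) (FX A B R XP)
    h1 h2' h2
  have hTXP : (TX A B R XT)ᴴ * mconj XP * TX A B R XT + HX A B R H XT - XP
      = (Rop A B R H XP - XP) + (FX A B R XT - FX A B R XP)ᴴ * RX R B XP
        * (FX A B R XT - FX A B R XP) := by
    rw [TX, HX, hRopEq, ← add_assoc, hkey]
    abel
  have hW1 : ((TX A B R XT)ᴴ * mconj XP * TX A B R XT + HX A B R H XT - XP).PosSemidef := by
    rw [hTXP]
    exact hRic.add hKpsd
  have hWpsd : ((Xstar - XP)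
      - (TX A B R XT)ᴴ * mconj (Xstar - XP) * TX A B R XT).PosSemidef := by
    have h := hC.add hW1
    have e : CStein (TX A B R XT) Xstar - HX A B R H XT
        + ((TX A B R XT)ᴴ * mconj XP * TX A B R XT + HX A B R H XT - XP)
        = (Xstar - XP) - (TX A B R XT)ᴴ * mconj (Xstar - XP) * TX A B R XT := by
      rw [CStein, mconj_sub, Matrix.mul_sub, Matrix.sub_mul]
      abel
    rwa [e] at h
  have hDpsd : (Xstar - XP).PosSemidef :=
    stein_psd (TX A B R XT) (Xstar - XP) (hXstar.sub hXP) hWpsd hrho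
  refine ⟨hDpsd, ?_⟩
  have hmpsd : (Bᴴ * mconj (Xstar - XP) * B).PosSemidef :=
    (posSemidef_mconj hDpsd).conjTranspose_mul_mul_same B
  have e : RX R B Xstar = RX R B XP + Bᴴ * mconj (Xstar - XP) * B := by
    rw [RX, RX, mconj_sub, Matrix.mul_sub, Matrix.sub_mul]
    abel
  rw [e]
  exact hRXP.add_posSemidef hmpsd


end CDARE
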